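/- Let a̲ ∈ [0,1) and A = [a̲,1]. Let u : A → ℝ be twice continuously differentiable with u' > 0 and u'' < 0 on A, and set m = min over a ∈ A of |u''(a)| > 0. Let c₀ = 1 − e^{−rΔ} with r, Δ > 0, let C ≥ 0, I_k ≥ 0, I_u ≥ 0 be constants, and let a_I ∈ A. Define g(x) = c₀·u(x) − C·(a_I·I_k + x·I_u)·x for x ∈ A, and for a fixed a* ∈ A define f(x) = c₀·u(x) − C·(a_I·I_k + a*·I_u)·x. Assume a* maximizes f over A and let a† be the unique maximizer of the strictly concave function g over A. Then c₀·m·(a* − a†) ≤ C·(2a† − a*)·I_u. In particular, the gap a* − a† between the equilibrium and static efficient actions is bounded above by a term proportional to the fraction I_u of unknown infected agents. -/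

import Mathlib

/-- Upper bound on the gap between equilibrium and static efficient actions:
`c₀ m (a* - a†) ≤ C (2a† - a*) I_u`, where `m = min_{a ∈ A} |u''(a)|`. -/
theorem stmt_12 (a0 : ℝ) (ha0 : a0 ∈ Set.Ico (0:ℝ) 1)
    (u u' u'' : ℝ → ℝ)
    (hderiv : ∀ x ∈ Set.Icc a0 1, HasDerivWithinAt u (u' x) (Set.Icc a0 1) x)
    (hderiv2 : ∀ x ∈ Set.Icc a0 1, HasDerivWithinAt u' (u'' x) (Set.Icc a0 1) x)
    (hu''cont : ContinuousOn u'' (Set.Icc a0 1))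
    (hu'pos : ∀ x ∈ Set.Icc a0 1, 0 < u' x)
    (hu''neg : ∀ x ∈ Set.Icc a0 1, u'' x < 0)
    (m : ℝ) (hm : IsLeast ((fun a => |u'' a|) '' Set.Icc a0 1) m)
    (r Δ C Ik Iu aI : ℝ) (hr : 0 < r) (hΔ : 0 < Δ) (hC : 0 ≤ C)
    (hIk : 0 ≤ Ik) (hIu : 0 ≤ Iu) (haI : aI ∈ Set.Icc a0 1)
    (astar adag : ℝ) (hastar : astar ∈ Set.Icc a0 1) (hadag : adag ∈ Set.Icc a0 1)
    -- `a*` maximizes `f(x) = c₀ u(x) - C(a_I I_k + a* I_u)x` over `A`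
    (hf : ∀ x ∈ Set.Icc a0 1,
      (1 - Real.exp (-(r*Δ))) * u x - C * (aI*Ik + astar*Iu) * x ≤
      (1 - Real.exp (-(r*Δ))) * u astar - C * (aI*Ik + astar*Iu) * astar)
    -- `a†` maximizes `g(x) = c₀ u(x) - C(a_I I_k + x I_u)x` over `A`
    (hg : ∀ x ∈ Set.Icc a0 1,
      (1 - Real.exp (-(r*Δ))) * u x - C * (aI*Ik + x*Iu) * x ≤
      (1 - Real.exp (-(r*Δ))) * u adag - C * (aI*Ik + adag*Iu) * adag)
    -- and `a†` is the unique such maximizer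
    (hg_unique : ∀ x ∈ Set.Icc a0 1,
      (∀ y ∈ Set.Icc a0 1,
        (1 - Real.exp (-(r*Δ))) * u y - C * (aI*Ik + y*Iu) * y ≤
        (1 - Real.exp (-(r*Δ))) * u x - C * (aI*Ik + x*Iu) * x) → x = adag) :
    (1 - Real.exp (-(r*Δ))) * m * (astar - adag) ≤ C * (2*adag - astar) * Iu := by
  obtain ⟨c0, hc0eq⟩ : ∃ c0, c0 = 1 - Real.exp (-(r*Δ)) := ⟨_, rfl⟩
  rw [← hc0eq] at hf hg ⊢
  have hc0 : 0 < c0 := by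
    have h1 : Real.exp (-(r*Δ)) < 1 := Real.exp_lt_one_iff.mpr (by nlinarith)
    rw [hc0eq]; linarith
  obtain ⟨ha00, ha01⟩ := ha0
  -- m ≥ 0 and u'' x ≤ -m on the interval
  have hm0 : 0 ≤ m := by
    obtain ⟨⟨a, ha, hae⟩, _⟩ := hm
    rw [← hae]; exact abs_nonneg _
  have hm_le : ∀ x ∈ Set.Icc a0 1, u'' x ≤ -m := by
    intro x hx
    have h1 : m ≤ |u'' x| := hm.2 ⟨x, hx, rfl⟩
    have h2 : |u'' x| = -u'' x := abs_of_neg (hu''neg x hx)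
    linarith
  -- Key lemma: u' decreases at rate at least m
  have hkey : ∀ x ∈ Set.Icc a0 1, ∀ y ∈ Set.Icc a0 1, x ≤ y →
      u' y ≤ u' x - m * (y - x) := by
    have hanti : AntitoneOn (fun z => u' z + m * z) (Set.Icc a0 1) := by
      apply antitoneOn_of_hasDerivWithinAt_nonpos (f' := fun z => u'' z + m)
        (convex_Icc a0 1)
      · exact fun x hx =>
          ((hderiv2 x hx).continuousWithinAt.add (continuousWithinAt_const.mul
          continuousWithinAt_id))
      · intro x hx
        have hx' : x ∈ Set.Icc a0 1 := interior_subset hx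
        have h1 : HasDerivWithinAt (fun z => u' z + m * z) (u'' x + m)
            (Set.Icc a0 1) x := by
          exact ((hderiv2 x hx').add ((hasDerivWithinAt_id x _).const_mul m)).congr_deriv (by ring)
        exact h1.mono interior_subset
      · intro x hx
        have hx' : x ∈ Set.Icc a0 1 := interior_subset hx
        have := hm_le x hx'
        linarith
    intro x hx y hy hxy
    have h1 := hanti hx hy hxy
    simp only at h1
    linarith
  -- Continuity of u on the interval
  have hucont : ContinuousOn u (Set.Icc a0 1) :=
    fun x hx => (hderiv x hx).continuousWithinAt
  -- MVT helper
  have hmvt : ∀ a ∈ Set.Icc a0 1, ∀ b ∈ Set.Icc a0 1, a < b →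
      ∃ ξ ∈ Set.Ioo a b, u b - u a = u' ξ * (b - a) := by
    intro a ha b hb hab
    have hsub : Set.Icc a b ⊆ Set.Icc a0 1 := Set.Icc_subset_Icc ha.1 hb.2
    have hder : ∀ x ∈ Set.Ioo a b, HasDerivAt u (u' x) x := by
      intro x hx
      have hx1 : x ∈ Set.Icc a0 1 := hsub (Set.Ioo_subset_Icc_self hx)
      have hnhd : Set.Icc a0 1 ∈ nhds x := by
        apply Icc_mem_nhds
        · exact lt_of_le_of_lt ha.1 hx.1
        · exact lt_of_lt_of_le hx.2 hb.2
      exact (hderiv x hx1).hasDerivAt hnhd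
    obtain ⟨ξ, hξ, hs⟩ := exists_hasDerivAt_eq_slope u u' hab (hucont.mono hsub) hder
    refine ⟨ξ, hξ, ?_⟩
    rw [hs, div_mul_cancel₀ _ (sub_ne_zero.mpr hab.ne')]
  rcases le_or_gt astar adag with hle | hlt
  · -- easy case
    have h1 : c0 * m * (astar - adag) ≤ 0 :=
      mul_nonpos_of_nonneg_of_nonpos (mul_nonneg hc0.le hm0) (by linarith)
    have h2 : 0 ≤ C * (2*adag - astar) * Iu := by
      have h3 : 0 ≤ 2*adag - astar := by linarith [hastar.1]
      positivity
    linarith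
  · -- main case: astar > adag
    have key : ∀ t : ℝ, 0 < t → t ≤ (astar - adag) / 2 →
        c0 * m * (astar - adag) ≤ C * (2*adag - astar) * Iu
          + t * (C * Iu + 2 * c0 * m) := by
      intro t ht htd
      obtain ⟨x1, hx1⟩ : ∃ x1, x1 = astar - t := ⟨_, rfl⟩
      obtain ⟨x2, hx2⟩ : ∃ x2, x2 = adag + t := ⟨_, rfl⟩
      have hx1mem : x1 ∈ Set.Icc a0 1 :=
        ⟨by rw [hx1]; linarith [hadag.1], by rw [hx1]; linarith [hastar.2]⟩
      have hx2mem : x2 ∈ Set.Icc a0 1 :=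
        ⟨by rw [hx2]; linarith [hadag.1], by rw [hx2]; linarith [hastar.2]⟩
      have h1 := hf x1 hx1mem
      have h2 := hg x2 hx2mem
      obtain ⟨ξ1, hξ1, he1⟩ := hmvt x1 hx1mem astar hastar (by rw [hx1]; linarith)
      obtain ⟨ξ2, hξ2, he2⟩ := hmvt adag hadag x2 hx2mem (by rw [hx2]; linarith)
      have hξ1mem : ξ1 ∈ Set.Icc a0 1 :=
        ⟨le_trans hx1mem.1 hξ1.1.le, le_trans hξ1.2.le hastar.2⟩
      have hξ2mem : ξ2 ∈ Set.Icc a0 1 :=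
        ⟨le_trans hadag.1 hξ2.1.le, le_trans hξ2.2.le hx2mem.2⟩
      have hξ1lb : x1 < ξ1 := hξ1.1
      have hξ2ub : ξ2 < x2 := hξ2.2
      have hξorder : ξ2 ≤ ξ1 := by rw [hx1] at hξ1lb; rw [hx2] at hξ2ub; linarith
      have hgap : (astar - adag) - 2*t ≤ ξ1 - ξ2 := by
        rw [hx1] at hξ1lb; rw [hx2] at hξ2ub; linarith
      have hcomp : u' ξ1 ≤ u' ξ2 - m * (ξ1 - ξ2) := hkey ξ2 hξ2mem ξ1 hξ1mem hξorder
      subst hx1 hx2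
      have he1' : c0 * (u astar - u (astar - t)) = c0 * (u' ξ1 * (astar - (astar - t))) :=
        congrArg (c0 * ·) he1
      have he2' : c0 * (u (adag + t) - u adag) = c0 * (u' ξ2 * (adag + t - adag)) :=
        congrArg (c0 * ·) he2
      have e1 : C * (aI*Ik + astar*Iu) * t ≤ c0 * u' ξ1 * t := by linarith [h1, he1']
      have e2 : c0 * u' ξ2 * t ≤ C * t * (aI*Ik + (2*adag + t)*Iu) := by
        linarith [h2, he2']
      have A1 : c0 * t * u' ξ1 ≤ c0 * t * (u' ξ2 - m * (ξ1 - ξ2)) :=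
        mul_le_mul_of_nonneg_left hcomp (by positivity)
      have A2 : m * ((astar - adag) - 2*t) ≤ m * (ξ1 - ξ2) :=
        mul_le_mul_of_nonneg_left hgap hm0
      have A3 : c0 * t * (m * ((astar - adag) - 2*t)) ≤ c0 * t * (m * (ξ1 - ξ2)) :=
        mul_le_mul_of_nonneg_left A2 (by positivity)
      -- combine, all multiplied by t
      have hX : (c0 * m * (astar - adag) - (C * (2*adag - astar) * Iu
          + t * (C * Iu + 2 * c0 * m))) * t ≤ 0 := by linarith [e1, e2, A1, A3]
      have hX' : (c0 * m * (astar - adag) - (C * (2*adag - astar) * Iu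
          + t * (C * Iu + 2 * c0 * m))) * t ≤ 0 * t := by linarith
      linarith [le_of_mul_le_mul_right hX' ht]
    have hε : ∀ ε > (0:ℝ), c0 * m * (astar - adag) ≤ C * (2*adag - astar) * Iu + ε := by
      intro ε hε
      obtain ⟨K, hK⟩ : ∃ K, K = C * Iu + 2 * c0 * m := ⟨_, rfl⟩
      have hKpos : 0 ≤ K := by rw [hK]; positivity
      obtain ⟨t, htdef⟩ : ∃ t, t = min ((astar - adag)/2) (ε / (K + 1)) := ⟨_, rfl⟩
      have htpos : 0 < t := by
        rw [htdef]; exact lt_min (by linarith) (by positivity)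
      have htd : t ≤ (astar - adag) / 2 := htdef ▸ min_le_left _ _
      have h := key t htpos htd
      rw [← hK] at h
      have htK : t * K ≤ ε := by
        have h1 : t ≤ ε / (K + 1) := htdef ▸ min_le_right _ _
        have h2 : t * K ≤ (ε / (K+1)) * K := by nlinarith
        have h3 : (ε / (K+1)) * K ≤ ε := by
          rw [div_mul_eq_mul_div, div_le_iff₀ (by linarith)]
          nlinarith
        linarith
      linarith
    linarith [le_of_forall_pos_le_add hε]
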